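/- Let $p$ be an odd prime, $k$ a field of characteristic $p$, $R = k[s,x,y]/(xy(x-y)(x+y-sy))$, and $q$ a power of $p$. Then for every $j$ with $2 \leq j \leq pq-1$, the image of $x^j y^{pq+1-j}$ in $R$ lies in the ideal $(x^q, y^q)^p R$. -/

import Mathlib

open MvPolynomial

set_option maxHeartbeats 2000000
set_option synthInstance.maxHeartbeats 400000

/-- Let `p` be an odd prime, `k` a field of characteristic `p`,
`R = k[s,x,y]/(xy(x-y)(x+y-sy))`, and `q` a power of `p`.  Then for every `j` with
`2 ≤ j ≤ pq-1`, the image of `x^j y^{pq+1-j}` in `R` lies in `(x^q, y^q)^p R`. -/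
theorem stmt7 (p : ℕ) (hp : p.Prime) (hodd : Odd p)
    (k : Type*) [Field k] [CharP k p]
    (s x y g : MvPolynomial (Fin 3) k)
    (hs : s = X 0) (hx : x = X 1) (hy : y = X 2)
    (hg : g = x * y * (x - y) * (x + y - s * y))
    (q : ℕ) (hq : ∃ e : ℕ, q = p ^ e) :
    ∀ j : ℕ, 2 ≤ j → j ≤ p * q - 1 →
      Ideal.Quotient.mk (Ideal.span {g}) (x ^ j * y ^ (p * q + 1 - j)) ∈
        (Ideal.span {Ideal.Quotient.mk (Ideal.span {g}) (x ^ q),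
                     Ideal.Quotient.mk (Ideal.span {g}) (y ^ q)}) ^ p := by
  have hq1 : 1 ≤ q := by
    obtain ⟨e, he⟩ := hq
    rw [he]; exact Nat.one_le_pow _ _ hp.pos
  have hp2 := hp.two_le
  have hodd' : p % 2 = 1 := Nat.odd_iff.mp hodd
  have hp3 : 3 ≤ p := by omega
  have hpq3 : 3 ≤ p * q := by
    calc (3 : ℕ) = 3 * 1 := by norm_num
    _ ≤ p * q := Nat.mul_le_mul hp3 hq1
  intro j hj2 hjle
  obtain ⟨mkq, hmkq⟩ : ∃ f : MvPolynomial (Fin 3) k →+*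
      MvPolynomial (Fin 3) k ⧸ Ideal.span {g}, Ideal.Quotient.mk (Ideal.span {g}) = f :=
    ⟨_, rfl⟩
  rw [hmkq]
  simp only [map_mul, map_pow]
  obtain ⟨N, hN⟩ : ∃ N, p * q = N := ⟨p * q, rfl⟩
  rw [hN] at hjle hpq3 ⊢
  set I := Ideal.span {mkq x ^ q, mkq y ^ q} ^ p with hI
  -- the image of g is zero
  have hg' : mkq g = 0 := by
    rw [← hmkq, Ideal.Quotient.eq_zero_iff_mem]
    exact Ideal.subset_span rfl
  have hG : mkq x ^ 3 * mkq y - mkq s * mkq x ^ 2 * mkq y ^ 2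
      + (mkq s - 1) * mkq x * mkq y ^ 3 = 0 := by
    have hg2 : mkq (x ^ 3 * y - s * x ^ 2 * y ^ 2 + (s - 1) * x * y ^ 3) = 0 := by
      rw [show x ^ 3 * y - s * x ^ 2 * y ^ 2 + (s - 1) * x * y ^ 3 = g from by rw [hg]; ring]
      exact hg'
    simp only [map_add, map_sub, map_mul, map_pow, map_one] at hg2
    linear_combination hg2
  -- basic relation
  have L1 : ∀ a b : ℕ, mkq x ^ (a + 3) * mkq y ^ (b + 1) - mkq x ^ (a + 2) * mkq y ^ (b + 2)
      = (mkq s - 1) * (mkq x ^ (a + 2) * mkq y ^ (b + 2) - mkq x ^ (a + 1) * mkq y ^ (b + 3)) := by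
    intro a b
    linear_combination (mkq x ^ a * mkq y ^ b) * hG
  -- iterated relation
  have L2 : ∀ i a b : ℕ,
      mkq x ^ (a + i + 2) * mkq y ^ (b + 1) - mkq x ^ (a + i + 1) * mkq y ^ (b + 2)
      = (mkq s - 1) ^ i *
        (mkq x ^ (a + 2) * mkq y ^ (b + 1 + i) - mkq x ^ (a + 1) * mkq y ^ (b + 2 + i)) := by
    intro i
    induction i with
    | zero => intro a b; ring
    | succ i ih =>
      intro a b
      linear_combination L1 (a + i) b + (mkq s - 1) * ih a (b + 1)
  -- telescoping
  have L3 : ∀ i b : ℕ,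
      mkq x ^ (i + 2) * mkq y ^ (b + 1) - mkq x ^ 1 * mkq y ^ (b + 2 + i)
      = (∑ m ∈ Finset.range (i + 1), (mkq s - 1) ^ m) *
        (mkq x ^ 2 * mkq y ^ (b + 1 + i) - mkq x ^ 1 * mkq y ^ (b + 2 + i)) := by
    intro i
    induction i with
    | zero =>
      intro b
      simp only [Finset.sum_range_succ, Finset.sum_range_zero, pow_zero, zero_add]
      ring
    | succ i ih =>
      intro b
      rw [Finset.sum_range_succ]
      linear_combination L2 (i + 1) 0 b + ih (b + 1)
  -- membership of monomials with exponents at least multiples of q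
  have memI : ∀ c a b : ℕ, c ≤ p → c * q ≤ a → (p - c) * q ≤ b →
      mkq x ^ a * mkq y ^ b ∈ I := by
    intro c a b hc ha hb
    obtain ⟨a', rfl⟩ := Nat.exists_eq_add_of_le ha
    obtain ⟨b', rfl⟩ := Nat.exists_eq_add_of_le hb
    rw [hI]
    have key : mkq x ^ (c * q + a') * mkq y ^ ((p - c) * q + b')
        = ((mkq x ^ q) ^ c * (mkq y ^ q) ^ (p - c)) * (mkq x ^ a' * mkq y ^ b') := by
      ring
    rw [key]
    have hsplit : Ideal.span {mkq x ^ q, mkq y ^ q} ^ p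
        = Ideal.span {mkq x ^ q, mkq y ^ q} ^ c * Ideal.span {mkq x ^ q, mkq y ^ q} ^ (p - c) := by
      conv_lhs => rw [← Nat.add_sub_cancel' hc]
      exact pow_add (Ideal.span {mkq x ^ q, mkq y ^ q}) c (p - c)
    rw [hsplit]
    exact Ideal.mul_mem_right _ _
      (Ideal.mul_mem_mul
        (Ideal.pow_mem_pow (Ideal.subset_span (Set.mem_insert _ _)) c)
        (Ideal.pow_mem_pow (Ideal.subset_span (Set.mem_insert_of_mem _ (Set.mem_singleton _))) (p - c)))
  -- the key element is in I
  have hw : ∀ m : ℕ, m + 1 = N →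
      mkq x ^ 2 * mkq y ^ m - mkq x ^ 1 * mkq y ^ (m + 1) ∈ I := by
    intro m hm
    rcases Nat.lt_or_ge q 2 with hqlt | hqge
    · -- q = 1
      have hq1' : q = 1 := by omega
      subst hq1'
      exact sub_mem (memI 2 2 m (by omega) (by omega) (by omega))
        (memI 1 1 (m + 1) (by omega) (by omega) (by omega))
    · -- q ≥ 2
      obtain ⟨c, hcq⟩ : ∃ c, q = c + 2 := ⟨q - 2, by omega⟩
      have h1 : 1 ≤ (p - 1) * q := by
        have := Nat.mul_le_mul (show 1 ≤ p - 1 by omega) hq1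
        simpa using this
      obtain ⟨K', h1K⟩ := Nat.exists_eq_add_of_le h1
      have hKN : 1 + K' + q = N := by
        have h2 : (p - 1) * q + q = p * q := by
          have h3 : p - 1 + 1 = p := by omega
          calc (p - 1) * q + q = (p - 1 + 1) * q := by ring
          _ = p * q := by rw [h3]
        rw [h1K, hN] at h2
        exact h2
      have eA := L2 (c + 1) 0 K'
      rw [show (0 : ℕ) + (c + 1) + 2 = q + 1 by omega,
          show (0 : ℕ) + (c + 1) + 1 = q by omega,
          show (0 : ℕ) + 2 = 2 by omega,
          show (0 : ℕ) + 1 = 1 by omega,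
          show K' + 1 + (c + 1) = m by omega,
          show K' + 2 + (c + 1) = m + 1 by omega] at eA
      have mA1 : mkq x ^ (q + 1) * mkq y ^ (K' + 1) ∈ I :=
        memI 1 (q + 1) (K' + 1) (by omega) (by omega) (by rw [h1K]; omega)
      have mA2 : mkq x ^ q * mkq y ^ (K' + 2) ∈ I :=
        memI 1 q (K' + 2) (by omega) (by omega) (by rw [h1K]; omega)
      have hA := sub_mem mA1 mA2
      rw [eA] at hA
      have eB := L3 c (K' + 1)
      rw [show c + 2 = q by omega,
          show K' + 1 + 1 = K' + 2 by omega,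
          show K' + 1 + 2 + c = m + 1 by omega,
          show K' + 1 + 1 + c = m by omega] at eB
      have mB2 : mkq x ^ 1 * mkq y ^ (m + 1) ∈ I :=
        memI 0 1 (m + 1) (Nat.zero_le p) (by omega) (by rw [Nat.sub_zero, hN]; omega)
      have hB := sub_mem mA2 mB2
      rw [eB] at hB
      have key : mkq x ^ 2 * mkq y ^ m - mkq x ^ 1 * mkq y ^ (m + 1)
          = (mkq s - 1) ^ (c + 1) * (mkq x ^ 2 * mkq y ^ m - mkq x ^ 1 * mkq y ^ (m + 1))
            - (mkq s - 1 - 1) * ((∑ mm ∈ Finset.range (c + 1), (mkq s - 1) ^ mm) *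
              (mkq x ^ 2 * mkq y ^ m - mkq x ^ 1 * mkq y ^ (m + 1))) := by
        linear_combination (mkq x ^ 2 * mkq y ^ m - mkq x ^ 1 * mkq y ^ (m + 1)) *
          geom_sum_mul (mkq s - 1) (c + 1)
      rw [key]
      exact sub_mem hA (Ideal.mul_mem_left _ _ hB)
  -- final assembly
  obtain ⟨jj, hjj⟩ : ∃ jj, j = jj + 2 := ⟨j - 2, by omega⟩
  obtain ⟨b2, hb2⟩ : ∃ b2, N = b2 + 2 + jj := ⟨N - 2 - jj, by omega⟩
  have efin := L3 jj b2
  rw [show jj + 2 = j by omega,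
      show b2 + 2 + jj = b2 + 1 + jj + 1 by omega] at efin
  rw [show N + 1 - j = b2 + 1 by omega]
  have hfin : mkq x ^ j * mkq y ^ (b2 + 1)
      = (∑ mm ∈ Finset.range (jj + 1), (mkq s - 1) ^ mm) *
          (mkq x ^ 2 * mkq y ^ (b2 + 1 + jj) - mkq x ^ 1 * mkq y ^ (b2 + 1 + jj + 1))
        + mkq x ^ 1 * mkq y ^ (b2 + 1 + jj + 1) := by
    linear_combination efin
  rw [hfin]
  exact add_mem (Ideal.mul_mem_left _ _ (hw (b2 + 1 + jj) (by omega)))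
    (memI 0 1 (b2 + 1 + jj + 1) (Nat.zero_le p) (by omega) (by rw [Nat.sub_zero, hN]; omega))
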